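/- Let σ be a weakly mixing measure-preserving action of a countable group G on a probability space (X,μ), i.e. the diagonal action of G on (X × X, μ ⊗ μ) is ergodic. Let γ₁, γ₂ ∈ Char(G) and suppose the constant cocycles they define are cohomologous: there exists a measurable u : X → circle such that for every g ∈ G, γ₁(g) = (u(x))⁻¹ · γ₂(g) · u(g⁻¹ • x) for μ-almost every x. Then γ₁ = γ₂. (In other words, the natural homomorphism from Char(G) into the first cohomology group H¹(σ,G) of the action is injective.) -/

import Mathlib

open MeasureTheory Filter Pointwise
open scoped symmDiff

noncomputable instance : MeasurableSpace Circle := borel Circle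
instance : BorelSpace Circle := ⟨rfl⟩

/-- For a weakly mixing measure-preserving action `σ` of a countable group `G`, if the
constant cocycles given by two characters `γ₁, γ₂ ∈ Char(G)` are cohomologous, then
`γ₁ = γ₂`; i.e. the natural map `Char(G) → H¹(σ,G)` is injective. -/
theorem stmt6 {G X : Type*} [Group G] [Countable G] [MeasurableSpace X]
    (μ : Measure X) [IsProbabilityMeasure μ] [MulAction G X]
    (hmp : ∀ g : G, MeasurePreserving (fun x : X => g • x) μ μ)
    (hwmix : ∀ A : Set (X × X), MeasurableSet A →
      (∀ g : G, (μ.prod μ) (((fun p : X × X => (g • p.1, g • p.2)) '' A) ∆ A) = 0) →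
      (μ.prod μ) A = 0 ∨ (μ.prod μ) A = 1)
    (γ₁ γ₂ : G →* Circle) (u : X → Circle) (hu : Measurable u)
    (hcoh : ∀ g : G, ∀ᵐ x ∂μ, γ₁ g = (u x)⁻¹ * γ₂ g * u (g⁻¹ • x)) :
    γ₁ = γ₂ := by
  -- the "eigenvalue" candidate
  set c : G → Circle := fun g => γ₁ g * (γ₂ g)⁻¹ with hc
  -- rewrite the cocycle relation: u (g⁻¹ • x) = c g * u x a.e.
  have aux : ∀ a b d e : Circle, a = b⁻¹ * d * e → e = a * d⁻¹ * b := by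
    intro a b d e h
    have h1 : b * a = d * e := by rw [h, ← mul_assoc, mul_inv_cancel_left]
    calc e = d⁻¹ * (d * e) := by rw [inv_mul_cancel_left]
      _ = d⁻¹ * (b * a) := by rw [h1]
      _ = a * d⁻¹ * b := by rw [mul_comm b a, ← mul_assoc, mul_comm d⁻¹ a]
  have hkey : ∀ g : G, ∀ᵐ x ∂μ, u (g⁻¹ • x) = c g * u x := by
    intro g
    filter_upwards [hcoh g] with x hx
    exact aux _ _ _ _ hx
  -- the function v on the product space, invariant under the diagonal action
  set v : X × X → Circle := fun p => u p.1 * (u p.2)⁻¹ with hv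
  have hvm : Measurable v := (hu.comp measurable_fst).mul (hu.comp measurable_snd).inv
  have hinv : ∀ g : G, ∀ᵐ p ∂μ.prod μ, v (g⁻¹ • p.1, g⁻¹ • p.2) = v p := by
    intro g
    have h1 : ∀ᵐ p ∂μ.prod μ, u (g⁻¹ • p.1) = c g * u p.1 :=
      MeasureTheory.Measure.quasiMeasurePreserving_fst.ae (hkey g)
    have h2 : ∀ᵐ p ∂μ.prod μ, u (g⁻¹ • p.2) = c g * u p.2 :=
      MeasureTheory.Measure.quasiMeasurePreserving_snd.ae (hkey g)
    filter_upwards [h1, h2] with p hp1 hp2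
    simp only [hv, hp1, hp2, mul_inv]
    rw [mul_comm (c g), mul_assoc, mul_inv_cancel_left]
  -- v is a.e. constant, by weak mixing
  have hconst : ∃ k : Circle, v =ᵐ[μ.prod μ] Function.const _ k := by
    refine exists_eventuallyEq_const_of_forall_separating (l := ae (μ.prod μ))
      MeasurableSet ?_
    intro U hU
    have hA : MeasurableSet (v ⁻¹' U) := hvm hU
    have hsd : ∀ g : G,
        (μ.prod μ) (((fun p : X × X => (g • p.1, g • p.2)) '' (v ⁻¹' U)) ∆ (v ⁻¹' U)) = 0 := by
      intro g
      have himg : (fun p : X × X => (g • p.1, g • p.2)) '' (v ⁻¹' U)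
          = (fun p : X × X => (g⁻¹ • p.1, g⁻¹ • p.2)) ⁻¹' (v ⁻¹' U) := by
        rw [Set.image_eq_preimage_of_inverse
          (g := fun p : X × X => (g⁻¹ • p.1, g⁻¹ • p.2)) (fun p => by simp) (fun p => by simp)]
      rw [himg, measure_symmDiff_eq_zero_iff, ← Set.preimage_comp]
      refine eventuallyEq_set.2 ?_
      filter_upwards [hinv g] with p hp
      simp only [Set.mem_preimage, Function.comp_apply]
      rw [show v (g⁻¹ • p.1, g⁻¹ • p.2) = v p from hp]
    rcases hwmix _ hA hsd with h0 | h1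
    · exact Or.inr (measure_eq_zero_iff_ae_notMem.mp h0)
    · refine Or.inl ?_
      have hcpl : (μ.prod μ) (v ⁻¹' U)ᶜ = 0 := by
        rw [measure_compl hA (measure_ne_top _ _), h1, measure_univ]
        simp
      filter_upwards [measure_eq_zero_iff_ae_notMem.mp hcpl] with p hp
      simpa using hp
  obtain ⟨k, hk⟩ := hconst
  -- hence u is a.e. constant
  have hkk : ∀ᵐ x ∂μ, ∀ᵐ y ∂μ, u x * (u y)⁻¹ = k :=
    MeasureTheory.Measure.ae_ae_of_ae_prod hk
  obtain ⟨x₀, hx₀⟩ := hkk.exists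
  -- so u y = k⁻¹ * u x₀ a.e.
  have huconst : ∀ᵐ y ∂μ, u y = k⁻¹ * u x₀ := by
    filter_upwards [hx₀] with y hy
    exact eq_inv_mul_iff_mul_eq.2 (mul_inv_eq_iff_eq_mul.mp hy).symm
  -- conclude c g = 1 for all g
  ext g
  have hg2 : ∀ᵐ x ∂μ, u (g⁻¹ • x) = k⁻¹ * u x₀ := (hmp g⁻¹).quasiMeasurePreserving.ae huconst
  have hfin : ∀ᵐ x ∂μ, (k⁻¹ * u x₀ : Circle) = c g * (k⁻¹ * u x₀) := by
    filter_upwards [hkey g, hg2, huconst] with x h1 h2 h3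
    rw [← h3, ← h1, h2, h3]
  obtain ⟨x, hx⟩ := hfin.exists
  have hcg : c g = 1 := right_eq_mul.mp hx
  have h4 : γ₁ g * (γ₂ g)⁻¹ = 1 := hcg
  have h5 := mul_eq_one_iff_eq_inv.mp h4
  rw [h5]; simp
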